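/- Let 0<C<D<1, 2<k<11/5 with D^k<C, ε ∈ (0, min{(11−5k)/4, (5−2k)/3, (3−k)/2}), Z > 0, λ ∈ (0,1) with D^k < λC, and r_n = min{ (1−λ)C²D^{2n(k−2+ε)}/(2Z), D^{2n(k−2+ε)}/(48Z), D^{4n(k−2+ε)/(3−k)}/2 }. There exists a constant M depending only on C, D, Z, k, ε (not on n) with the following property. Let f be a holomorphic map on the unit ball of ℂ² with f(0)=0 and C‖z‖ ≤ ‖f(z)‖ ≤ D‖z‖; let h and h′ be maps of the form identity plus a homogeneous quadratic polynomial whose coefficients have modulus at most Z·D^{−2n(k−2+ε)} and Z·D^{−2(n+1)(k−2+ε)} respectively; let g(z,w) = (a z, b w + c z + d z²) with C ≤ |a|, |b| ≤ D, |c| ≤ D, |d| ≤ Z·D^{−2n(k−2+ε)}; and suppose the Taylor polynomials of degree 2 at 0 of h and of g^{−1}∘h′∘f coincide. Then ‖h(z) − g^{−1}∘h′∘f(z)‖ ≤ M·‖z‖^k for all z with ‖z‖ ≤ r_n. -/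

import Mathlib

open Set Filter Metric Topology

noncomputable section

/-- The radius `r_n = min{(1-λ)C²D^{2n(k-2+ε)}/(2Z), D^{2n(k-2+ε)}/(48Z),
D^{4n(k-2+ε)/(3-k)}/2}`. -/
def rSeq (C D k ε Z lam : ℝ) (n : ℕ) : ℝ :=
  min (min ((1 - lam) * C ^ 2 * D ^ (2 * (n : ℝ) * (k - 2 + ε)) / (2 * Z))
        (D ^ (2 * (n : ℝ) * (k - 2 + ε)) / (48 * Z)))
      (D ^ (4 * (n : ℝ) * (k - 2 + ε) / (3 - k)) / 2)

/-- The map `g(z,w) = (a z, b w + c z + d z²)`. -/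
def gMap (a b c d : ℂ) (z : ℂ × ℂ) : ℂ × ℂ :=
  (a * z.1, b * z.2 + c * z.1 + d * z.1 ^ 2)

/-- A homogeneous quadratic map of ℂ² with coefficient vector `cf`. -/
def quadMap (cf : Fin 6 → ℂ) (z : ℂ × ℂ) : ℂ × ℂ :=
  (cf 0 * z.1 ^ 2 + cf 1 * z.1 * z.2 + cf 2 * z.2 ^ 2,
   cf 3 * z.1 ^ 2 + cf 4 * z.1 * z.2 + cf 5 * z.2 ^ 2)

/-- The explicit inverse of `gMap a b c d` (for `a, b ≠ 0`). -/
def gInv (a b c d : ℂ) (z : ℂ × ℂ) : ℂ × ℂ :=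
  (a⁻¹ * z.1, b⁻¹ * (z.2 - c * (a⁻¹ * z.1) - d * (a⁻¹ * z.1) ^ 2))

/-! ### Auxiliary lemmas -/

lemma dslope_bound {E : Type*} [NormedAddCommGroup E] [NormedSpace ℂ E]
    {g : ℂ → E} {ρ B : ℝ} (hρ : 0 < ρ)
    (hd : DifferentiableOn ℂ g (ball 0 ρ))
    (h0 : g 0 = 0) (hbd : ∀ t ∈ ball (0:ℂ) ρ, ‖g t‖ ≤ B) :
    ∀ t ∈ ball (0:ℂ) ρ, ‖dslope g 0 t‖ ≤ B / ρ := by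
  intro t ht
  have key : ∀ B' : ℝ, B < B' → ‖dslope g 0 t‖ ≤ B' / ρ := by
    intro B' hB'
    have hmaps : MapsTo g (ball (0:ℂ) ρ) (ball (g 0) B') := by
      intro s hs
      rw [h0, mem_ball_zero_iff]
      exact lt_of_le_of_lt (hbd s hs) hB'
    exact Complex.norm_dslope_le_div_of_mapsTo_ball hd (hmaps.mono_right ball_subset_closedBall) ht
  refine le_of_forall_pos_le_add ?_
  intro ε hε
  have h1 := key (B + ε * ρ) (by nlinarith)
  calc ‖dslope g 0 t‖ ≤ (B + ε * ρ) / ρ := h1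
    _ = B / ρ + ε := by field_simp

lemma dslope_diffOn {E : Type*} [NormedAddCommGroup E] [NormedSpace ℂ E] [CompleteSpace E]
    {g : ℂ → E} {q : FormalMultilinearSeries ℂ ℂ E} {ρ : ℝ}
    (hq : HasFPowerSeriesAt g q 0) (hd : DifferentiableOn ℂ g (ball 0 ρ)) :
    DifferentiableOn ℂ (dslope g 0) (ball 0 ρ) := by
  intro x hx
  rcases eq_or_ne x 0 with rfl | hne
  · exact (hq.has_fpower_series_dslope_fslope.analyticAt).differentiableAt.differentiableWithinAt
  · exact (differentiableWithinAt_dslope_of_ne hne).2 (hd x hx)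

lemma schwarz3 {g : ℂ → ℂ × ℂ} {q : FormalMultilinearSeries ℂ ℂ (ℂ × ℂ)} {ρ B : ℝ}
    (hρ : 0 < ρ) (hq : HasFPowerSeriesAt g q 0)
    (hd : DifferentiableOn ℂ g (ball 0 ρ))
    (hbd : ∀ t ∈ ball (0:ℂ) ρ, ‖g t‖ ≤ B)
    (h0 : g 0 = 0) (h1 : q.coeff 1 = 0) (h2 : q.coeff 2 = 0) :
    ∀ t ∈ ball (0:ℂ) ρ, ‖g t‖ ≤ B / ρ ^ 3 * ‖t‖ ^ 3 := by
  set g₁ := dslope g 0 with hg₁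
  have hq1 : HasFPowerSeriesAt g₁ q.fslope 0 := hq.has_fpower_series_dslope_fslope
  have hd1 : DifferentiableOn ℂ g₁ (ball 0 ρ) := dslope_diffOn hq hd
  have hg₁0 : g₁ 0 = 0 := by
    rw [hg₁, dslope_same, hq.deriv]; exact h1
  have hb1 : ∀ t ∈ ball (0:ℂ) ρ, ‖g₁ t‖ ≤ B / ρ := dslope_bound hρ hd h0 hbd
  set g₂ := dslope g₁ 0 with hg₂
  have hq2 : HasFPowerSeriesAt g₂ q.fslope.fslope 0 := hq1.has_fpower_series_dslope_fslope
  have hd2 : DifferentiableOn ℂ g₂ (ball 0 ρ) := dslope_diffOn hq1 hd1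
  have hg₂0 : g₂ 0 = 0 := by
    rw [hg₂, dslope_same, hq1.deriv]
    show q.fslope.coeff 1 = 0
    rw [FormalMultilinearSeries.coeff_fslope]; exact h2
  have hb2 : ∀ t ∈ ball (0:ℂ) ρ, ‖g₂ t‖ ≤ B / ρ / ρ := dslope_bound hρ hd1 hg₁0 hb1
  set g₃ := dslope g₂ 0 with hg₃
  have hb3 : ∀ t ∈ ball (0:ℂ) ρ, ‖g₃ t‖ ≤ B / ρ / ρ / ρ := dslope_bound hρ hd2 hg₂0 hb2
  intro t ht
  rcases eq_or_ne t 0 with rfl | hne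
  · have hB0 : 0 ≤ B := le_trans (norm_nonneg _) (hbd 0 (mem_ball_self hρ))
    simp only [h0, norm_zero]
    positivity
  · have hrec : ∀ (f : ℂ → ℂ × ℂ), f 0 = 0 → f t = t • dslope f 0 t := by
      intro f hf0
      rw [dslope_of_ne _ hne, slope_def_module, hf0, sub_zero, sub_zero, smul_inv_smul₀ hne]
    have e1 : g t = t • g₁ t := hrec g h0
    have e2 : g₁ t = t • g₂ t := hrec g₁ hg₁0
    have e3 : g₂ t = t • g₃ t := hrec g₂ hg₂0
    have : ‖g t‖ = ‖t‖ ^ 3 * ‖g₃ t‖ := by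
      rw [e1, e2, e3, norm_smul, norm_smul, norm_smul]; ring
    rw [this]
    calc ‖t‖ ^ 3 * ‖g₃ t‖ ≤ ‖t‖ ^ 3 * (B / ρ / ρ / ρ) :=
        mul_le_mul_of_nonneg_left (hb3 t ht) (by positivity)
      _ = B / ρ ^ 3 * ‖t‖ ^ 3 := by ring

lemma schwarz_cubed_2d {φ : ℂ × ℂ → ℂ × ℂ} {R A : ℝ} (hR : 0 < R) (hA : 0 ≤ A)
    (hφ : AnalyticOnNhd ℂ φ (ball 0 R))
    (hbd : ∀ w ∈ ball (0:ℂ × ℂ) R, ‖φ w‖ ≤ A * ‖w‖)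
    (h0 : φ 0 = 0)
    (h1 : ∀ v : ℂ × ℂ, fderiv ℂ φ 0 v = 0)
    (h2 : ∀ v : ℂ × ℂ, fderiv ℂ (fderiv ℂ φ) 0 v v = 0) :
    ∀ z ∈ ball (0:ℂ × ℂ) R, ‖φ z‖ ≤ A / R ^ 2 * ‖z‖ ^ 3 := by
  intro z hz
  rcases eq_or_ne z 0 with rfl | hzne
  · simp [h0]
  have hzpos : 0 < ‖z‖ := norm_pos_iff.2 hzne
  have hzR : ‖z‖ < R := mem_ball_zero_iff.1 hz
  set ρ := R / ‖z‖ with hρdef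
  have hρ : 0 < ρ := div_pos hR hzpos
  set ψ : ℂ → ℂ × ℂ := fun t => φ (t • z) with hψdef
  have hmem : ∀ t : ℂ, t ∈ ball (0:ℂ) ρ → t • z ∈ ball (0:ℂ × ℂ) R := by
    intro t ht
    rw [mem_ball_zero_iff] at ht ⊢
    rw [norm_smul]
    calc ‖t‖ * ‖z‖ < ρ * ‖z‖ := mul_lt_mul_of_pos_right ht hzpos
      _ = R := div_mul_cancel₀ R hzpos.ne'
  have hline : ∀ t : ℂ, HasDerivAt (fun s : ℂ => s • z) z t := by
    intro t
    simpa using (hasDerivAt_id t).smul_const z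
  have hψd : DifferentiableOn ℂ ψ (ball 0 ρ) := by
    intro t ht
    exact ((hφ _ (hmem t ht)).differentiableAt.comp t
      (hline t).differentiableAt).differentiableWithinAt
  have hψbd : ∀ t ∈ ball (0:ℂ) ρ, ‖ψ t‖ ≤ A * R := by
    intro t ht
    calc ‖ψ t‖ ≤ A * ‖t • z‖ := hbd _ (hmem t ht)
      _ ≤ A * R := mul_le_mul_of_nonneg_left
          (le_of_lt (mem_ball_zero_iff.1 (hmem t ht))) hA
  have hψ0 : ψ 0 = 0 := by simp [hψdef, h0]
  obtain ⟨q, hq⟩ := hψd.analyticAt (isOpen_ball.mem_nhds (mem_ball_self hρ))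
  have hzero : ((0:ℂ) • z) = (0 : ℂ × ℂ) := zero_smul _ _
  have hd1 : HasDerivAt ψ (fderiv ℂ φ 0 z) 0 := by
    have hfd : HasFDerivAt φ (fderiv ℂ φ 0) ((0:ℂ) • z) := by
      rw [hzero]; exact (hφ 0 (mem_ball_self hR)).differentiableAt.hasFDerivAt
    exact hfd.comp_hasDerivAt 0 (hline 0)
  have hcoeff1 : q.coeff 1 = 0 := by
    have h' := hq.deriv
    rw [hd1.deriv, h1 z] at h'
    exact h'.symm
  have hW : AnalyticOnNhd ℂ (fderiv ℂ φ) (ball 0 R) := hφ.fderiv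
  have hev : deriv ψ =ᶠ[𝓝 (0:ℂ)] fun t => fderiv ℂ φ (t • z) z := by
    have hU : IsOpen {t : ℂ | t • z ∈ ball (0:ℂ × ℂ) R} :=
      isOpen_ball.preimage (continuous_id.smul continuous_const)
    refine Filter.eventuallyEq_of_mem (hU.mem_nhds ?_) ?_
    · show (0:ℂ) • z ∈ ball (0:ℂ × ℂ) R
      rw [hzero]; exact mem_ball_self hR
    · intro t ht
      have hfd : HasFDerivAt φ (fderiv ℂ φ (t • z)) (t • z) :=
        (hφ _ ht).differentiableAt.hasFDerivAt
      exact (hfd.comp_hasDerivAt t (hline t)).deriv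
  have hd2 : HasDerivAt (fun t : ℂ => fderiv ℂ φ (t • z) z)
      (fderiv ℂ (fderiv ℂ φ) 0 z z) 0 := by
    have hWd : HasFDerivAt (fderiv ℂ φ) (fderiv ℂ (fderiv ℂ φ) 0) ((0:ℂ) • z) := by
      rw [hzero]; exact (hW 0 (mem_ball_self hR)).differentiableAt.hasFDerivAt
    have h' := hWd.comp_hasDerivAt 0 (hline 0)
    have h'' := h'.clm_apply (hasDerivAt_const (0:ℂ) z)
    simpa [hzero] using h''
  have hderiv2 : deriv (deriv ψ) 0 = fderiv ℂ (fderiv ℂ φ) 0 z z := by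
    rw [hev.deriv_eq, hd2.deriv]
  have hcoeff2 : q.coeff 2 = 0 := by
    obtain ⟨r, hqr⟩ := hq
    have hfac := hqr.factorial_smul (y := (1:ℂ)) 2
    have h2d : iteratedFDeriv ℂ 2 ψ 0 (fun _ => (1:ℂ)) = 0 := by
      rw [← iteratedDeriv_eq_iteratedFDeriv]
      rw [iteratedDeriv_succ, iteratedDeriv_one, hderiv2]
      exact h2 z
    rw [h2d, ← Nat.cast_smul_eq_nsmul ℂ] at hfac
    have h2ne : ((Nat.factorial 2 : ℕ) : ℂ) ≠ 0 :=
      Nat.cast_ne_zero.mpr (Nat.factorial_ne_zero 2)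
    exact (smul_eq_zero.mp hfac).resolve_left h2ne
  have hone : (1:ℂ) ∈ ball (0:ℂ) ρ := by
    rw [mem_ball_zero_iff]
    simpa using (one_lt_div hzpos).2 hzR
  have hfinal := schwarz3 hρ hq hψd hψbd hψ0 hcoeff1 hcoeff2 1 hone
  have hψ1 : ψ 1 = φ z := by simp [hψdef]
  have hn1 : ‖(1:ℂ)‖ = 1 := by simp
  rw [hψ1, hn1] at hfinal
  have hzne' : ‖z‖ ≠ 0 := hzpos.ne'
  have hRne : R ≠ 0 := hR.ne'
  calc ‖φ z‖ ≤ A * R / ρ ^ 3 * 1 ^ 3 := hfinal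
    _ = A / R ^ 2 * ‖z‖ ^ 3 := by
        rw [hρdef]
        field_simp

lemma quadMap_analytic (cf : Fin 6 → ℂ) : AnalyticOnNhd ℂ (quadMap cf) univ := by
  apply AnalyticOnNhd.prod
  · exact ((analyticOnNhd_const.mul (analyticOnNhd_fst.pow 2)).add
      ((analyticOnNhd_const.mul analyticOnNhd_fst).mul analyticOnNhd_snd)).add
      (analyticOnNhd_const.mul (analyticOnNhd_snd.pow 2))
  · exact ((analyticOnNhd_const.mul (analyticOnNhd_fst.pow 2)).add
      ((analyticOnNhd_const.mul analyticOnNhd_fst).mul analyticOnNhd_snd)).add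
      (analyticOnNhd_const.mul (analyticOnNhd_snd.pow 2))

lemma gInv_analytic (a b c d : ℂ) : AnalyticOnNhd ℂ (gInv a b c d) univ := by
  apply AnalyticOnNhd.prod
  · exact analyticOnNhd_const.mul analyticOnNhd_fst
  · exact analyticOnNhd_const.mul ((analyticOnNhd_snd.sub
      (analyticOnNhd_const.mul (analyticOnNhd_const.mul analyticOnNhd_fst))).sub
      (analyticOnNhd_const.mul ((analyticOnNhd_const.mul analyticOnNhd_fst).pow 2)))

lemma quadMap_norm_le {cf : Fin 6 → ℂ} {Zb : ℝ} (h : ∀ i, ‖cf i‖ ≤ Zb)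
    (w : ℂ × ℂ) : ‖quadMap cf w‖ ≤ 3 * Zb * (‖w‖ * ‖w‖) := by
  have hZb : 0 ≤ Zb := le_trans (norm_nonneg _) (h 0)
  have h1 : ‖w.1‖ ≤ ‖w‖ := norm_fst_le w
  have h2 : ‖w.2‖ ≤ ‖w‖ := norm_snd_le w
  have hw : 0 ≤ ‖w‖ := norm_nonneg w
  have key : ∀ c0 c1 c2 : ℂ, ‖c0‖ ≤ Zb → ‖c1‖ ≤ Zb →
      ‖c2‖ ≤ Zb →
      ‖c0 * w.1 ^ 2 + c1 * w.1 * w.2 + c2 * w.2 ^ 2‖ ≤ 3 * Zb * (‖w‖ * ‖w‖) := by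
    intro c0 c1 c2 h0 h1' h2'
    have n0 : ‖c0‖ ≤ Zb := by exact h0
    have n1 : ‖c1‖ ≤ Zb := by exact h1'
    have n2 : ‖c2‖ ≤ Zb := by exact h2'
    have t0 : ‖c0‖ * (‖w.1‖ * ‖w.1‖) ≤ Zb * (‖w‖ * ‖w‖) :=
      mul_le_mul n0 (mul_le_mul h1 h1 (norm_nonneg _) hw) (by positivity) hZb
    have t1 : ‖c1‖ * (‖w.1‖ * ‖w.2‖) ≤ Zb * (‖w‖ * ‖w‖) :=
      mul_le_mul n1 (mul_le_mul h1 h2 (norm_nonneg _) hw) (by positivity) hZb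
    have t2 : ‖c2‖ * (‖w.2‖ * ‖w.2‖) ≤ Zb * (‖w‖ * ‖w‖) :=
      mul_le_mul n2 (mul_le_mul h2 h2 (norm_nonneg _) hw) (by positivity) hZb
    calc ‖c0 * w.1 ^ 2 + c1 * w.1 * w.2 + c2 * w.2 ^ 2‖
        ≤ ‖c0 * w.1 ^ 2‖ + ‖c1 * w.1 * w.2‖ + ‖c2 * w.2 ^ 2‖ := norm_add₃_le
      _ = ‖c0‖ * (‖w.1‖ * ‖w.1‖) + ‖c1‖ * (‖w.1‖ * ‖w.2‖) + ‖c2‖ * (‖w.2‖ * ‖w.2‖) := by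
          rw [norm_mul, norm_mul, norm_mul, norm_mul, norm_pow, norm_pow]; ring
      _ ≤ 3 * Zb * (‖w‖ * ‖w‖) := by linarith
  rw [quadMap, Prod.norm_def]
  apply max_le
  · exact key _ _ _ (h 0) (h 1) (h 2)
  · exact key _ _ _ (h 3) (h 4) (h 5)

lemma phi_norm_bound
    (f : ℂ × ℂ → ℂ × ℂ) (ch ch' : Fin 6 → ℂ) (a b c d : ℂ)
    {C D Z Rn Za Za' : ℝ}
    (hC : 0 < C) (hD0 : 0 < D) (hD : D < 1) (hZ : 0 < Z)
    (hRn0 : 0 < Rn) (hRn1 : Rn ≤ 1)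
    (hch : ∀ i, ‖ch i‖ ≤ Za)
    (hch' : ∀ i, ‖ch' i‖ ≤ Za')
    (hZaRn : Za * Rn ≤ Z)
    (hZa'Rn : Za' * Rn * (D * D) ≤ Z)
    (haC : C ≤ ‖a‖) (hbC : C ≤ ‖b‖) (hcD : ‖c‖ ≤ D)
    (hdZ : ‖d‖ ≤ Za)
    (hfb : ∀ w : ℂ × ℂ, ‖w‖ < 1 → ‖f w‖ ≤ D * ‖w‖)
    (w : ℂ × ℂ) (hw : ‖w‖ < Rn) :
    ‖(w + quadMap ch w) - gInv a b c d (f w + quadMap ch' (f w))‖ ≤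
      ((1 + 3 * Z) + C⁻¹ * ((1 + 3 * Z) + C⁻¹ * (1 + 3 * Z)
        + C⁻¹ ^ 2 * Z * (1 + 3 * Z) ^ 2)) * ‖w‖ := by
  have hCinv : 0 < C⁻¹ := inv_pos.2 hC
  have hs0 : 0 ≤ ‖w‖ := norm_nonneg w
  have hs1 : ‖w‖ < 1 := lt_of_lt_of_le hw hRn1
  have hZa0 : 0 ≤ Za := le_trans (norm_nonneg _) (hch 0)
  have hZa'0 : 0 ≤ Za' := le_trans (norm_nonneg _) (hch' 0)
  have hfw : ‖f w‖ ≤ D * ‖w‖ := hfb w hs1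
  have hfwRn : ‖f w‖ ≤ D * Rn :=
    le_trans hfw (mul_le_mul_of_nonneg_left hw.le hD0.le)
  set c₁ : ℝ := 1 + 3 * Z with hc₁def
  have hc₁ : 0 < c₁ := by rw [hc₁def]; linarith
  -- bound for the h' quadratic term applied to f w
  have hq'bd : ‖quadMap ch' (f w)‖ ≤ 3 * Z * ‖w‖ := by
    have hb := quadMap_norm_le hch' (f w)
    have hprod : ‖f w‖ * ‖f w‖ ≤ (D * ‖w‖) * (D * Rn) :=
      mul_le_mul hfw hfwRn (norm_nonneg _) (mul_nonneg hD0.le hs0)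
    have hco : (0:ℝ) ≤ 3 * Za' := by linarith
    calc ‖quadMap ch' (f w)‖ ≤ 3 * Za' * ((D * ‖w‖) * (D * Rn)) :=
          le_trans hb (mul_le_mul_of_nonneg_left hprod hco)
      _ = 3 * (Za' * Rn * (D * D)) * ‖w‖ := by ring
      _ ≤ 3 * Z * ‖w‖ :=
          mul_le_mul_of_nonneg_right (by linarith) hs0
  have hF1 : ‖f w + quadMap ch' (f w)‖ ≤ c₁ * ‖w‖ := by
    calc ‖f w + quadMap ch' (f w)‖ ≤ ‖f w‖ + ‖quadMap ch' (f w)‖ := norm_add_le _ _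
      _ ≤ D * ‖w‖ + 3 * Z * ‖w‖ := add_le_add hfw hq'bd
      _ ≤ c₁ * ‖w‖ := by
          rw [hc₁def]
          nlinarith [mul_nonneg (sub_nonneg.2 hD.le) hs0]
  have hFRn : ‖f w + quadMap ch' (f w)‖ ≤ c₁ * Rn :=
    le_trans hF1 (mul_le_mul_of_nonneg_left hw.le hc₁.le)
  have nF1 : ‖(f w + quadMap ch' (f w)).1‖ ≤ c₁ * ‖w‖ := le_trans (norm_fst_le _) hF1
  have nF2 : ‖(f w + quadMap ch' (f w)).2‖ ≤ c₁ * ‖w‖ := le_trans (norm_snd_le _) hF1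
  have nF1R : ‖(f w + quadMap ch' (f w)).1‖ ≤ c₁ * Rn := le_trans (norm_fst_le _) hFRn
  have haC' : ‖a⁻¹‖ ≤ C⁻¹ := by
    rw [norm_inv]
    exact inv_anti₀ hC haC
  have hbC' : ‖b⁻¹‖ ≤ C⁻¹ := by
    rw [norm_inv]
    exact inv_anti₀ hC hbC
  have hdRn : ‖d‖ * Rn ≤ Z := by
    have hd' : ‖d‖ ≤ Za := by exact hdZ
    calc ‖d‖ * Rn ≤ Za * Rn := mul_le_mul_of_nonneg_right hd' hRn0.le
      _ ≤ Z := hZaRn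
  set F : ℂ × ℂ := f w + quadMap ch' (f w) with hFdef
  have hGbd : ‖gInv a b c d F‖ ≤
      C⁻¹ * (c₁ + C⁻¹ * c₁ + C⁻¹ ^ 2 * Z * c₁ ^ 2) * ‖w‖ := by
    have comp1 : ‖a⁻¹ * F.1‖ ≤ C⁻¹ * (c₁ * ‖w‖) := by
      rw [norm_mul]
      exact mul_le_mul haC' nF1 (norm_nonneg _) hCinv.le
    have e1 : ‖c * (a⁻¹ * F.1)‖ ≤ C⁻¹ * c₁ * ‖w‖ := by
      rw [norm_mul]
      have hcn : ‖c‖ ≤ 1 := by linarith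
      calc ‖c‖ * ‖a⁻¹ * F.1‖ ≤ 1 * (C⁻¹ * (c₁ * ‖w‖)) :=
            mul_le_mul hcn comp1 (norm_nonneg _) zero_le_one
        _ = C⁻¹ * c₁ * ‖w‖ := by ring
    have e2 : ‖d * (a⁻¹ * F.1) ^ 2‖ ≤ C⁻¹ ^ 2 * Z * c₁ ^ 2 * ‖w‖ := by
      rw [norm_mul, norm_pow, norm_mul]
      have hsq : (‖a⁻¹‖ * ‖F.1‖) ^ 2 ≤ (C⁻¹ * (c₁ * ‖w‖)) * (C⁻¹ * (c₁ * Rn)) := by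
        rw [pow_two]
        exact mul_le_mul
          (mul_le_mul haC' nF1 (norm_nonneg _) hCinv.le)
          (mul_le_mul haC' nF1R (norm_nonneg _) hCinv.le)
          (by positivity) (by positivity)
      calc ‖d‖ * (‖a⁻¹‖ * ‖F.1‖) ^ 2
          ≤ ‖d‖ * ((C⁻¹ * (c₁ * ‖w‖)) * (C⁻¹ * (c₁ * Rn))) :=
            mul_le_mul_of_nonneg_left hsq (norm_nonneg d)
        _ = (‖d‖ * Rn) * (C⁻¹ ^ 2 * c₁ ^ 2 * ‖w‖) := by ring
        _ ≤ Z * (C⁻¹ ^ 2 * c₁ ^ 2 * ‖w‖) :=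
            mul_le_mul_of_nonneg_right hdRn (by positivity)
        _ = C⁻¹ ^ 2 * Z * c₁ ^ 2 * ‖w‖ := by ring
    have hinner : ‖F.2 - c * (a⁻¹ * F.1) - d * (a⁻¹ * F.1) ^ 2‖ ≤
        (c₁ + C⁻¹ * c₁ + C⁻¹ ^ 2 * Z * c₁ ^ 2) * ‖w‖ := by
      calc ‖F.2 - c * (a⁻¹ * F.1) - d * (a⁻¹ * F.1) ^ 2‖
          ≤ ‖F.2 - c * (a⁻¹ * F.1)‖ + ‖d * (a⁻¹ * F.1) ^ 2‖ := norm_sub_le _ _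
        _ ≤ ‖F.2‖ + ‖c * (a⁻¹ * F.1)‖ + ‖d * (a⁻¹ * F.1) ^ 2‖ := by
            have := norm_sub_le (F.2) (c * (a⁻¹ * F.1))
            linarith
        _ ≤ c₁ * ‖w‖ + C⁻¹ * c₁ * ‖w‖ + C⁻¹ ^ 2 * Z * c₁ ^ 2 * ‖w‖ :=
            add_le_add (add_le_add nF2 e1) e2
        _ = (c₁ + C⁻¹ * c₁ + C⁻¹ ^ 2 * Z * c₁ ^ 2) * ‖w‖ := by ring
    rw [gInv, Prod.norm_def]
    apply max_le
    · calc ‖a⁻¹ * F.1‖ ≤ C⁻¹ * (c₁ * ‖w‖) := comp1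
        _ ≤ C⁻¹ * (c₁ + C⁻¹ * c₁ + C⁻¹ ^ 2 * Z * c₁ ^ 2) * ‖w‖ := by
            have h1 : (0:ℝ) ≤ C⁻¹ * c₁ := (mul_pos hCinv hc₁).le
            have h2 : (0:ℝ) ≤ C⁻¹ ^ 2 * Z * c₁ ^ 2 :=
              (mul_pos (mul_pos (pow_pos hCinv 2) hZ) (pow_pos hc₁ 2)).le
            nlinarith [mul_nonneg (mul_nonneg hCinv.le h1) hs0,
              mul_nonneg (mul_nonneg hCinv.le h2) hs0]
    · calc ‖b⁻¹ * (F.2 - c * (a⁻¹ * F.1) - d * (a⁻¹ * F.1) ^ 2)‖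
          = ‖b⁻¹‖ * ‖F.2 - c * (a⁻¹ * F.1) - d * (a⁻¹ * F.1) ^ 2‖ := norm_mul _ _
        _ ≤ C⁻¹ * ((c₁ + C⁻¹ * c₁ + C⁻¹ ^ 2 * Z * c₁ ^ 2) * ‖w‖) :=
            mul_le_mul hbC' hinner (norm_nonneg _) hCinv.le
        _ = C⁻¹ * (c₁ + C⁻¹ * c₁ + C⁻¹ ^ 2 * Z * c₁ ^ 2) * ‖w‖ := by ring
  have hhbd : ‖w + quadMap ch w‖ ≤ c₁ * ‖w‖ := by
    have hqb := quadMap_norm_le hch w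
    have hZas : Za * ‖w‖ ≤ Z := by
      calc Za * ‖w‖ ≤ Za * Rn := mul_le_mul_of_nonneg_left hw.le hZa0
        _ ≤ Z := hZaRn
    calc ‖w + quadMap ch w‖ ≤ ‖w‖ + ‖quadMap ch w‖ := norm_add_le _ _
      _ ≤ ‖w‖ + 3 * Za * (‖w‖ * ‖w‖) := add_le_add le_rfl hqb
      _ = ‖w‖ + 3 * (Za * ‖w‖) * ‖w‖ := by ring
      _ ≤ ‖w‖ + 3 * Z * ‖w‖ := by
          have : 3 * (Za * ‖w‖) * ‖w‖ ≤ 3 * Z * ‖w‖ :=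
            mul_le_mul_of_nonneg_right (by linarith) hs0
          linarith
      _ = c₁ * ‖w‖ := by rw [hc₁def]; ring
  calc ‖(w + quadMap ch w) - gInv a b c d F‖
      ≤ ‖w + quadMap ch w‖ + ‖gInv a b c d F‖ := norm_sub_le _ _
    _ ≤ c₁ * ‖w‖ + C⁻¹ * (c₁ + C⁻¹ * c₁ + C⁻¹ ^ 2 * Z * c₁ ^ 2) * ‖w‖ :=
        add_le_add hhbd hGbd
    _ = ((1 + 3 * Z) + C⁻¹ * ((1 + 3 * Z) + C⁻¹ * (1 + 3 * Z)
        + C⁻¹ ^ 2 * Z * (1 + 3 * Z) ^ 2)) * ‖w‖ := by rw [hc₁def]; ring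

/-- One-step comparison: there is a constant `M = M(C,D,Z,k,ε)` such that whenever the
degree-2 Taylor polynomials of `h` and `g⁻¹∘h′∘f` at `0` coincide (with the stated
bounds on `f`, `g`, `h`, `h′`), one has `‖h(z) − g⁻¹∘h′∘f(z)‖ ≤ M‖z‖^k` on `B(0,rₙ)`. -/
theorem one_step_comparison
    (C D k ε Z lam : ℝ)
    (hC : 0 < C) (hCD : C < D) (hD : D < 1)
    (hk2 : 2 < k) (hk : k < 11 / 5) (hDk : D ^ k < C)
    (hε : 0 < ε ∧ ε < min (min ((11 - 5 * k) / 4) ((5 - 2 * k) / 3)) ((3 - k) / 2))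
    (hZ : 0 < Z) (hlam : 0 < lam ∧ lam < 1) (hDlam : D ^ k < lam * C) :
    ∃ M : ℝ, 0 < M ∧
      ∀ (n : ℕ) (f : ℂ × ℂ → ℂ × ℂ) (ch ch' : Fin 6 → ℂ) (a b c d : ℂ),
        AnalyticOn ℂ f (ball (0 : ℂ × ℂ) 1) → f 0 = 0 →
        (∀ z : ℂ × ℂ, ‖z‖ < 1 → C * ‖z‖ ≤ ‖f z‖ ∧ ‖f z‖ ≤ D * ‖z‖) →
        (∀ i, ‖ch i‖ ≤ Z * D ^ (-(2 * (n : ℝ)) * (k - 2 + ε))) →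
        (∀ i, ‖ch' i‖ ≤ Z * D ^ (-(2 * ((n : ℝ) + 1)) * (k - 2 + ε))) →
        C ≤ ‖a‖ → ‖a‖ ≤ D →
        C ≤ ‖b‖ → ‖b‖ ≤ D → ‖c‖ ≤ D →
        ‖d‖ ≤ Z * D ^ (-(2 * (n : ℝ)) * (k - 2 + ε)) →
        (∀ i : ℕ, i ≤ 2 →
          iteratedFDeriv ℂ i (fun z => z + quadMap ch z) 0 =
            iteratedFDeriv ℂ i
              (fun z => gInv a b c d (f z + quadMap ch' (f z))) 0) →
        ∀ z : ℂ × ℂ, ‖z‖ ≤ rSeq C D k ε Z lam n →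
          ‖(z + quadMap ch z) - gInv a b c d (f z + quadMap ch' (f z))‖
            ≤ M * ‖z‖ ^ k := by
  have hD0 : 0 < D := lt_trans hC hCD
  have hε1 : 0 < ε := hε.1
  have hε2 : ε < (3 - k) / 2 := lt_of_lt_of_le hε.2 (min_le_right _ _)
  have hk3 : k < 3 := by linarith only [hk]
  have h3k : 0 < 3 - k := by linarith only [hk3]
  have hT0 : 0 < k - 2 + ε := by linarith only [hk2, hε1]
  have hT1 : k - 2 + ε < 1 := by linarith only [hk3, hε2]
  have hCinv : 0 < C⁻¹ := inv_pos.2 hC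
  have hc₁pos : (0:ℝ) < 1 + 3 * Z := by linarith only [hZ]
  have hMpos : (0:ℝ) < (1 + 3 * Z) + C⁻¹ * ((1 + 3 * Z) + C⁻¹ * (1 + 3 * Z)
      + C⁻¹ ^ 2 * Z * (1 + 3 * Z) ^ 2) := by
    have h1 : 0 < C⁻¹ * (1 + 3 * Z) := mul_pos hCinv hc₁pos
    have h2 : 0 < C⁻¹ ^ 2 * Z * (1 + 3 * Z) ^ 2 :=
      mul_pos (mul_pos (pow_pos hCinv 2) hZ) (pow_pos hc₁pos 2)
    have h3 : 0 < (1 + 3 * Z) + C⁻¹ * (1 + 3 * Z) + C⁻¹ ^ 2 * Z * (1 + 3 * Z) ^ 2 := by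
      linarith only [hc₁pos, h1, h2]
    have h4 : 0 < C⁻¹ * ((1 + 3 * Z) + C⁻¹ * (1 + 3 * Z)
        + C⁻¹ ^ 2 * Z * (1 + 3 * Z) ^ 2) := mul_pos hCinv h3
    linarith only [hc₁pos, h4]
  refine ⟨(1 + 3 * Z) + C⁻¹ * ((1 + 3 * Z) + C⁻¹ * (1 + 3 * Z)
      + C⁻¹ ^ 2 * Z * (1 + 3 * Z) ^ 2), hMpos, ?_⟩
  intro n f ch ch' a b c d hfA hf0 hfb hch hch' haC haD hbC hbD hcD hdZ htay z hz
  set M : ℝ := (1 + 3 * Z) + C⁻¹ * ((1 + 3 * Z) + C⁻¹ * (1 + 3 * Z)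
      + C⁻¹ ^ 2 * Z * (1 + 3 * Z) ^ 2) with hMdef
  have hnT0 : 0 ≤ (n : ℝ) * (k - 2 + ε) := mul_nonneg (Nat.cast_nonneg n) hT0.le
  set Rn : ℝ := D ^ (2 * (n : ℝ) * (k - 2 + ε)) with hRndef
  have hRn0 : 0 < Rn := Real.rpow_pos_of_pos hD0 _
  have hRn1 : Rn ≤ 1 := Real.rpow_le_one hD0.le hD.le (by linarith only [hnT0])
  have hid1 : D ^ (-(2 * (n : ℝ)) * (k - 2 + ε)) * Rn = 1 := by
    rw [hRndef, ← Real.rpow_add hD0,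
      show -(2 * (n : ℝ)) * (k - 2 + ε) + 2 * (n : ℝ) * (k - 2 + ε) = 0 by ring,
      Real.rpow_zero]
  have hid2 : D ^ (-(2 * ((n : ℝ) + 1)) * (k - 2 + ε)) * Rn = D ^ (-2 * (k - 2 + ε)) := by
    rw [hRndef, ← Real.rpow_add hD0]
    congr 1
    ring
  have hD2T : D ^ (-2 * (k - 2 + ε)) * (D * D) ≤ 1 := by
    have hD2 : D ^ ((2:ℝ)) = D * D := by
      rw [show (2:ℝ) = ((2:ℕ) : ℝ) by norm_num, Real.rpow_natCast]
      ring
    have e : D ^ (-2 * (k - 2 + ε)) * (D * D) = D ^ (-2 * (k - 2 + ε) + 2) := by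
      rw [Real.rpow_add hD0, hD2]
    rw [e]
    exact Real.rpow_le_one hD0.le hD.le (by linarith only [hT1])
  have hZaRn : Z * D ^ (-(2 * (n : ℝ)) * (k - 2 + ε)) * Rn ≤ Z := by
    rw [mul_assoc, hid1, mul_one]
  have hZa'Rn : Z * D ^ (-(2 * ((n : ℝ) + 1)) * (k - 2 + ε)) * Rn * (D * D) ≤ Z := by
    calc Z * D ^ (-(2 * ((n : ℝ) + 1)) * (k - 2 + ε)) * Rn * (D * D)
        = Z * ((D ^ (-(2 * ((n : ℝ) + 1)) * (k - 2 + ε)) * Rn) * (D * D)) := by ring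
      _ = Z * (D ^ (-2 * (k - 2 + ε)) * (D * D)) := by rw [hid2]
      _ ≤ Z * 1 := mul_le_mul_of_nonneg_left hD2T hZ.le
      _ = Z := mul_one Z
  -- uniform bound for φ on the ball of radius Rn
  set φ : ℂ × ℂ → ℂ × ℂ :=
    fun w => (w + quadMap ch w) - gInv a b c d (f w + quadMap ch' (f w)) with hφdef
  have hφbd : ∀ w ∈ ball (0 : ℂ × ℂ) Rn, ‖φ w‖ ≤ M * ‖w‖ := by
    intro w hw
    exact phi_norm_bound f ch ch' a b c d hC hD0 hD hZ hRn0 hRn1 hch hch'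
      hZaRn hZa'Rn haC hbC hcD hdZ (fun v hv => (hfb v hv).2) w (mem_ball_zero_iff.1 hw)
  -- analyticity of φ on the ball of radius Rn
  have hfA0 : AnalyticOnNhd ℂ f (ball (0 : ℂ × ℂ) 1) :=
    (isOpen_ball.analyticOn_iff_analyticOnNhd).mp hfA
  have hfA' : AnalyticOnNhd ℂ f (ball 0 Rn) := hfA0.mono (ball_subset_ball hRn1)
  have hhA : AnalyticOnNhd ℂ (fun w : ℂ × ℂ => w + quadMap ch w) (ball (0 : ℂ × ℂ) Rn) :=
    analyticOnNhd_id.add ((quadMap_analytic ch).mono (subset_univ _))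
  have hGA : AnalyticOnNhd ℂ
      (fun w : ℂ × ℂ => gInv a b c d (f w + quadMap ch' (f w))) (ball (0 : ℂ × ℂ) Rn) :=
    (gInv_analytic a b c d).comp
      (hfA'.add (((quadMap_analytic ch').comp hfA' (mapsTo_univ _ _)))) (mapsTo_univ _ _)
  have hφA : AnalyticOnNhd ℂ φ (ball (0 : ℂ × ℂ) Rn) := hhA.sub hGA
  have hmem0 : (0 : ℂ × ℂ) ∈ ball (0 : ℂ × ℂ) Rn := mem_ball_self hRn0
  -- vanishing of the Taylor data of φ at 0 up to order 2
  have hφ0 : φ 0 = 0 := by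
    have h00 := htay 0 (by norm_num)
    have h0' := congrArg
      (fun L : ContinuousMultilinearMap ℂ (fun _ : Fin 0 => ℂ × ℂ) (ℂ × ℂ) =>
        L (fun _ => 0)) h00
    simp only [iteratedFDeriv_zero_apply] at h0'
    have e : φ 0 = (0 + quadMap ch 0) - gInv a b c d (f 0 + quadMap ch' (f 0)) := rfl
    rw [e, sub_eq_zero]
    exact h0'
  have hφ1 : ∀ v : ℂ × ℂ, fderiv ℂ φ 0 v = 0 := by
    intro v
    have h11 := htay 1 (by norm_num)
    have happ := congrArg
      (fun L : ContinuousMultilinearMap ℂ (fun _ : Fin 1 => ℂ × ℂ) (ℂ × ℂ) =>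
        L (fun _ => v)) h11
    simp only [iteratedFDeriv_one_apply] at happ
    have hsubd : fderiv ℂ φ 0 =
        fderiv ℂ (fun w : ℂ × ℂ => w + quadMap ch w) 0 -
          fderiv ℂ (fun w : ℂ × ℂ => gInv a b c d (f w + quadMap ch' (f w))) 0 :=
      fderiv_sub (hhA 0 hmem0).differentiableAt (hGA 0 hmem0).differentiableAt
    rw [hsubd, ContinuousLinearMap.sub_apply, happ, sub_self]
  have hφ2 : ∀ v : ℂ × ℂ, fderiv ℂ (fderiv ℂ φ) 0 v v = 0 := by
    intro v
    have h22 := htay 2 (by norm_num)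
    have happ := congrArg
      (fun L : ContinuousMultilinearMap ℂ (fun _ : Fin 2 => ℂ × ℂ) (ℂ × ℂ) =>
        L (fun _ => v)) h22
    simp only [iteratedFDeriv_two_apply] at happ
    have hev : fderiv ℂ φ =ᶠ[𝓝 (0 : ℂ × ℂ)]
        fun y => fderiv ℂ (fun w : ℂ × ℂ => w + quadMap ch w) y -
          fderiv ℂ (fun w : ℂ × ℂ => gInv a b c d (f w + quadMap ch' (f w))) y := by
      refine Filter.eventuallyEq_of_mem (isOpen_ball.mem_nhds hmem0) ?_
      intro y hy
      exact fderiv_sub (hhA y hy).differentiableAt (hGA y hy).differentiableAt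
    have hsubd2 : fderiv ℂ (fderiv ℂ φ) 0 =
        fderiv ℂ (fderiv ℂ (fun w : ℂ × ℂ => w + quadMap ch w)) 0 -
          fderiv ℂ (fderiv ℂ (fun w : ℂ × ℂ => gInv a b c d (f w + quadMap ch' (f w)))) 0 := by
      rw [hev.fderiv_eq]
      exact fderiv_sub ((hhA.fderiv) 0 hmem0).differentiableAt
        ((hGA.fderiv) 0 hmem0).differentiableAt
    rw [hsubd2, ContinuousLinearMap.sub_apply, ContinuousLinearMap.sub_apply, happ, sub_self]
  -- cubic Schwarz bound
  have hbound := schwarz_cubed_2d hRn0 hMpos.le hφA hφbd hφ0 hφ1 hφ2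
  -- conclusion
  rcases eq_or_ne z 0 with rfl | hzne
  · have e : (0 : ℂ × ℂ) + quadMap ch 0 - gInv a b c d (f 0 + quadMap ch' (f 0)) = 0 := hφ0
    rw [e, norm_zero, Real.zero_rpow (by linarith only [hk2] : k ≠ 0), mul_zero]
  · have hs0 : 0 < ‖z‖ := norm_pos_iff.2 hzne
    have hr3 : rSeq C D k ε Z lam n ≤ D ^ (4 * (n : ℝ) * (k - 2 + ε) / (3 - k)) / 2 :=
      min_le_right _ _
    have hX0 : 0 < D ^ (4 * (n : ℝ) * (k - 2 + ε) / (3 - k)) := Real.rpow_pos_of_pos hD0 _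
    have hXRn : D ^ (4 * (n : ℝ) * (k - 2 + ε) / (3 - k)) ≤ Rn := by
      rw [hRndef]
      apply Real.rpow_le_rpow_of_exponent_ge hD0 hD.le
      rw [le_div_iff₀ h3k]
      have hprod : (0:ℝ) ≤ ((n : ℝ) * (k - 2 + ε)) * (2 * k - 2) :=
        mul_nonneg hnT0 (by linarith only [hk2])
      nlinarith [hprod]
    have hzRn : ‖z‖ < Rn := by
      have h1 := le_trans hz hr3
      linarith only [h1, hX0, hXRn]
    have hb := hbound z (mem_ball_zero_iff.2 hzRn)
    have hz3 : ‖z‖ ^ (3:ℕ) ≤ ‖z‖ ^ k * Rn ^ (2:ℕ) := by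
      have e1 : ‖z‖ ^ (3:ℕ) = ‖z‖ ^ k * ‖z‖ ^ (3 - k) := by
        rw [← Real.rpow_natCast ‖z‖ 3, show ((3:ℕ) : ℝ) = k + (3 - k) by push_cast; ring,
          Real.rpow_add hs0]
      have e2 : ‖z‖ ^ (3 - k) ≤ Rn ^ (2:ℕ) := by
        have s1 : ‖z‖ ^ (3 - k) ≤ (D ^ (4 * (n : ℝ) * (k - 2 + ε) / (3 - k)) / 2) ^ (3 - k) :=
          Real.rpow_le_rpow hs0.le (le_trans hz hr3) h3k.le
        have s2 : (D ^ (4 * (n : ℝ) * (k - 2 + ε) / (3 - k)) / 2) ^ (3 - k) =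
            D ^ (4 * (n : ℝ) * (k - 2 + ε)) / 2 ^ (3 - k) := by
          rw [Real.div_rpow hX0.le (by norm_num : (0:ℝ) ≤ 2), ← Real.rpow_mul hD0.le]
          congr 2
          field_simp
        have s3 : (1:ℝ) ≤ 2 ^ (3 - k) := by
          have := Real.rpow_le_rpow_of_exponent_le (by norm_num : (1:ℝ) ≤ 2) h3k.le
          simpa using this
        have s4 : D ^ (4 * (n : ℝ) * (k - 2 + ε)) / 2 ^ (3 - k) ≤
            D ^ (4 * (n : ℝ) * (k - 2 + ε)) :=
          div_le_self (Real.rpow_pos_of_pos hD0 _).le s3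
        have s5 : D ^ (4 * (n : ℝ) * (k - 2 + ε)) = Rn ^ (2:ℕ) := by
          rw [hRndef, ← Real.rpow_natCast (D ^ (2 * (n : ℝ) * (k - 2 + ε))) 2,
            ← Real.rpow_mul hD0.le]
          congr 1
          push_cast
          ring
        calc ‖z‖ ^ (3 - k)
            ≤ D ^ (4 * (n : ℝ) * (k - 2 + ε)) / 2 ^ (3 - k) := by rw [← s2]; exact s1
          _ ≤ D ^ (4 * (n : ℝ) * (k - 2 + ε)) := s4
          _ = Rn ^ (2:ℕ) := s5
      calc ‖z‖ ^ (3:ℕ) = ‖z‖ ^ k * ‖z‖ ^ (3 - k) := e1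
        _ ≤ ‖z‖ ^ k * Rn ^ (2:ℕ) :=
            mul_le_mul_of_nonneg_left e2 (Real.rpow_nonneg hs0.le k)
    calc ‖(z + quadMap ch z) - gInv a b c d (f z + quadMap ch' (f z))‖
        ≤ M / Rn ^ 2 * ‖z‖ ^ 3 := hb
      _ ≤ M / Rn ^ 2 * (‖z‖ ^ k * Rn ^ 2) :=
          mul_le_mul_of_nonneg_left hz3 (div_nonneg hMpos.le (pow_nonneg hRn0.le 2))
      _ = M * ‖z‖ ^ k := by
          field_simp
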